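/- Weakest action lemma: In a finite totally symmetric unexploitable game with actions A = {1,...,L}, let A^(l) be the sets obtained by recursively removing a selected strongest action a*(A^(l)), and let a̲ := a*(A^(L)) be the last remaining action. Then a̲ is weakest: s_j(a̲, a_{-j}) - G_j(a̲, a_{-j}) ≤ 0 for all a_{-j} ∈ A^{n-1}. -/
import Mathlib


open Finset

lemma eraseNonempty {n : ℕ} (hn : 2 ≤ n) (j : Fin n) :
    (Finset.univ.erase j).Nonempty := by
  apply Finset.card_pos.mp
  rw [Finset.card_erase_of_mem (Finset.mem_univ j), Finset.card_univ, Fintype.card_fin]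
  omega

/-- `chain astar l` is the set `A^(l+1)` obtained from the full action set by
successively removing the selected strongest actions. -/
def chain {A : Type} [Fintype A] [DecidableEq A] (astar : Finset A → A) : ℕ → Finset A
  | 0 => Finset.univ
  | l + 1 => (chain astar l).erase (astar (chain astar l))

lemma chain_subset {A : Type} [Fintype A] [DecidableEq A] (astar : Finset A → A)
    {l m : ℕ} (h : l ≤ m) : chain astar m ⊆ chain astar l := by
  induction m with
  | zero => simp_all
  | succ m ih =>
    rcases Nat.lt_or_ge l (m+1) with h'|h'
    · exact (Finset.erase_subset _ _).trans (ih (by omega))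
    · have : l = m + 1 := by omega
      simp [this]

lemma chain_card {A : Type} [Fintype A] [DecidableEq A] (astar : Finset A → A)
    (hmem : ∀ B : Finset A, B.Nonempty → astar B ∈ B)
    {l : ℕ} (h : l ≤ Fintype.card A) :
    (chain astar l).card = Fintype.card A - l := by
  induction l with
  | zero => simp [chain]
  | succ l ih =>
    have hc := ih (by omega)
    have hne : (chain astar l).Nonempty := Finset.card_pos.mp (by omega)
    rw [chain, Finset.card_erase_of_mem (hmem _ hne), hc]; omega

/-- Weakest action lemma: in a finite totally symmetric unexploitable game, the last
remaining action `a̲ = astar (A^(L))` is weakest, i.e. whenever player `j` plays `a̲`,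
`s_j(a) ≤ G_j(a) = max_{k ≠ j} s_k(a)` for every profile of the opponents. -/
theorem weakest_action {n : ℕ} (hn : 2 ≤ n) {A : Type}
    [Fintype A] [DecidableEq A] [Nonempty A]
    (s : Fin n → (Fin n → A) → ℝ)
    (hsym : ∀ (π : Equiv.Perm (Fin n)) (j : Fin n) (a : Fin n → A),
      s (π j) a = s j (a ∘ π))
    (astar : Finset A → A)
    (hunex : ∀ A' : Finset A, A'.Nonempty → astar A' ∈ A' ∧
      ∀ (j : Fin n) (a : Fin n → A), a j = astar A' → (∀ k, k ≠ j → a k ∈ A') →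
        (Finset.univ.erase j).sup' (eraseNonempty hn j) (fun k => s k a) ≤ s j a) :
    ∀ (j : Fin n) (a : Fin n → A),
      a j = astar (chain astar (Fintype.card A - 1)) →
      s j a ≤ (Finset.univ.erase j).sup' (eraseNonempty hn j) (fun k => s k a) := by
  intro j a haj
  set L := Fintype.card A with hLdef
  have hL1 : 1 ≤ L := Fintype.card_pos
  have hmem : ∀ B : Finset A, B.Nonempty → astar B ∈ B := fun B hB => (hunex B hB).1
  have hcardL : (chain astar (L-1)).card = L - (L-1) := chain_card astar hmem (by omega)
  have hneL : (chain astar (L-1)).Nonempty := Finset.card_pos.mp (by omega)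
  have habar : astar (chain astar (L-1)) ∈ chain astar (L-1) := hmem _ hneL
  classical
  set P : ℕ → Prop := fun l => ∀ k, a k ∈ chain astar l with hPdef
  have hP0 : P 0 := fun k => Finset.mem_univ _
  set l := Nat.findGreatest P (L-1) with hldef
  have hPl : P l := Nat.findGreatest_spec (Nat.zero_le _) hP0
  by_cases hcase : l = L - 1
  · -- diagonal case: everyone plays a̲
    have hc1 : (chain astar (L-1)).card ≤ 1 := by omega
    have hsingle : ∀ k, a k = astar (chain astar (L-1)) := by
      intro k
      have h1 : a k ∈ chain astar (L-1) := hcase ▸ hPl k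
      exact Finset.card_le_one.mp hc1 _ h1 _ habar
    obtain ⟨k, hk⟩ := eraseNonempty hn j
    have hkj : k ≠ j := Finset.ne_of_mem_erase hk
    have hks : s k a = s j a := by
      have h := hsym (Equiv.swap j k) j a
      rw [Equiv.swap_apply_left] at h
      have hconst : a ∘ (Equiv.swap j k) = a := by
        funext m
        simp only [Function.comp_apply]
        rw [hsingle ((Equiv.swap j k) m), hsingle m]
      rw [hconst] at h
      exact h
    calc s j a = s k a := hks.symm
      _ ≤ _ := Finset.le_sup' (fun m => s m a) hk
  · -- some other player plays astar (chain l)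
    have hllt : l < L - 1 := lt_of_le_of_ne (Nat.findGreatest_le _) hcase
    have hnP : ¬ P (l+1) :=
      Nat.findGreatest_is_greatest (Nat.lt_succ_self l) (by omega)
    obtain ⟨k, hk⟩ := not_forall.mp hnP
    have hkl : a k ∈ chain astar l := hPl k
    have hak : a k = astar (chain astar l) := by
      by_contra h
      exact hk (Finset.mem_erase.mpr ⟨h, hkl⟩)
    have hne_l : (chain astar l).Nonempty := ⟨a k, hkl⟩
    have hkj : k ≠ j := by
      intro h
      subst h
      apply hk
      have hin : astar (chain astar (L-1)) ∈ chain astar (l+1) :=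
        chain_subset astar (by omega : l+1 ≤ L-1) habar
      rwa [haj]
    have hmain := (hunex (chain astar l) hne_l).2 k a hak (fun m _ => hPl m)
    have h1 : s j a ≤ s k a :=
      le_trans (Finset.le_sup' (fun m => s m a)
        (Finset.mem_erase.mpr ⟨hkj.symm, Finset.mem_univ _⟩)) hmain
    have h2 : s k a ≤ (Finset.univ.erase j).sup' (eraseNonempty hn j) (fun m => s m a) :=
      Finset.le_sup' (fun m => s m a) (Finset.mem_erase.mpr ⟨hkj, Finset.mem_univ _⟩)
    exact h1.trans h2
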